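/- Let f₁, f₂ : ℝⁿ → ℝ be convex functions and f = f₁ − f₂. Let x* ∈ ℝⁿ be a global minimizer of f (f(x*) ≤ f(x) for all x), let x̄ ∈ ℝⁿ be a local minimizer of f, and set α = f(x̄) − f(x*) (so α ≥ 0). Then for every ε ≥ 0 one has ∂_ε f₂(x̄) ⊆ ∂_{ε+α} f₁(x̄). -/
import Mathlib

open scoped RealInnerProductSpace

/-- The ε-subdifferential of `g` at `x`. -/
def epsSubdiff {n : ℕ} (g : EuclideanSpace ℝ (Fin n) → ℝ) (ε : ℝ)
    (x : EuclideanSpace ℝ (Fin n)) : Set (EuclideanSpace ℝ (Fin n)) :=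
  {ξ | ∀ y, g y ≥ g x + ⟪ξ, y - x⟫ - ε}

/-- The subdifferential of `g` at `x`. -/
def subdiff {n : ℕ} (g : EuclideanSpace ℝ (Fin n) → ℝ)
    (x : EuclideanSpace ℝ (Fin n)) : Set (EuclideanSpace ℝ (Fin n)) :=
  {ξ | ∀ y, g y ≥ g x + ⟪ξ, y - x⟫}

/-- The t-spherical subdifferential of `g` at `x`. -/
def sphSubdiff {n : ℕ} (g : EuclideanSpace ℝ (Fin n) → ℝ) (t : ℝ)
    (x : EuclideanSpace ℝ (Fin n)) : Set (EuclideanSpace ℝ (Fin n)) :=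
  convexHull ℝ {ξ | ∃ d : EuclideanSpace ℝ (Fin n), ‖d‖ = 1 ∧ ξ ∈ subdiff g (x + t • d)}

theorem eps_subdiff_inclusion_at_local_min {n : ℕ}
    (f₁ f₂ f : EuclideanSpace ℝ (Fin n) → ℝ)
    (h₁ : ConvexOn ℝ Set.univ f₁) (h₂ : ConvexOn ℝ Set.univ f₂)
    (hf : ∀ x, f x = f₁ x - f₂ x)
    (xstar xbar : EuclideanSpace ℝ (Fin n))
    (hglob : ∀ x, f xstar ≤ f x)
    (hloc : ∃ U : Set (EuclideanSpace ℝ (Fin n)),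
      IsOpen U ∧ xbar ∈ U ∧ ∀ y ∈ U, f xbar ≤ f y)
    (α : ℝ) (hα : α = f xbar - f xstar) :
    ∀ ε : ℝ, 0 ≤ ε → epsSubdiff f₂ ε xbar ⊆ epsSubdiff f₁ (ε + α) xbar := by
  intro ε hε ξ hξ y
  have h2 := hξ y
  have hg := hglob y
  have hfy := hf y
  have hfb := hf xbar
  simp only [epsSubdiff, Set.mem_setOf_eq] at *
  linarith
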